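/- arXiv:2107.09057 — 2 statements merged into one kernel-verified Lean document; each statement's English description precedes it below -/
import Mathlib

section
/- L^r norms of complex Gaussians and their Fourier transforms: let a > b > 0 be reals and define f_{a,b}(x) = exp(−π (a + i b)² x²) (a Schwartz function since Re((a+ib)²) = a² − b² > 0). Then for every real 1 ≤ r < ∞: ‖f_{a,b}‖_r = (r (a² − b²))^(−1/(2r)) and ‖𝓕 f_{a,b}‖_r = (a² + b²)^(1/r − 1/2) * (r (a² − b²))^(−1/(2r)). Consequently, for reals 1 < p < q < ∞, ‖f_{a,b}‖_q ‖𝓕f_{a,b}‖_q / (‖f_{a,b}‖_p ‖𝓕f_{a,b}‖_p) = (p^(1/p)/q^(1/q)) * ((a² + b²)/(a² − b²))^(1/q − 1/p). -/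
open MeasureTheory SchwartzMap

/-- The `L^r` norm of `f : ℝ → ℂ` with respect to Lebesgue measure. -/
noncomputable def Lnorm (r : ℝ) (f : ℝ → ℂ) : ℝ :=
  (∫ x : ℝ, ‖f x‖ ^ r) ^ (1 / r)

/-- The sup norm `‖f‖_∞ = sup_x |f x|`. -/
noncomputable def Lsup (f : ℝ → ℂ) : ℝ := ⨆ x : ℝ, ‖f x‖

/-- The Fourier transform `𝓕 f (ξ) = ∫ f x · e^{-2πi x ξ} dx`. -/
noncomputable def FT (f : ℝ → ℂ) : ℝ → ℂ := fun ξ =>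
  ∫ x : ℝ, f x * Complex.exp (-2 * Real.pi * Complex.I * x * ξ)

/-- The complex Gaussian `f_{a,b}(x) = exp(-π (a + i b)² x²)`. -/
noncomputable def fab (a b : ℝ) : ℝ → ℂ := fun x =>
  Complex.exp (-(Real.pi : ℂ) * ((a : ℂ) + (b : ℂ) * Complex.I) ^ 2 * (x : ℂ) ^ 2)

lemma FT_eq_fourierIntegral (f : ℝ → ℂ) : FT f = FourierTransform.fourier f := by
  ext ξ
  rw [FT, Real.fourier_real_eq_integral_exp_smul]
  congr 1
  ext x
  rw [smul_eq_mul, mul_comm]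
  congr 1
  push_cast
  ring

lemma Lnorm_of_abs_gauss {K c : ℝ} (hK : 0 < K) (hc : 0 < c) {r : ℝ} (hr : 0 < r)
    {f : ℝ → ℂ} (hf : ∀ x, ‖f x‖ = K * Real.exp (-(Real.pi * c) * x ^ 2)) :
    Lnorm r f = K * (r * c) ^ (-(1 / (2 * r))) := by
  have hrc : (0:ℝ) < r * c := mul_pos hr hc
  have h1 : ∀ x : ℝ, ‖f x‖ ^ r
      = K ^ r * Real.exp (-(Real.pi * (r * c)) * x ^ 2) := by
    intro x
    rw [hf x, Real.mul_rpow hK.le (Real.exp_pos _).le, ← Real.exp_mul]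
    ring_nf
  unfold Lnorm
  simp_rw [h1]
  rw [MeasureTheory.integral_const_mul, integral_gaussian]
  have h2 : Real.pi / (Real.pi * (r * c)) = (r * c)⁻¹ := by
    field_simp
  rw [h2, Real.sqrt_eq_rpow, ← Real.rpow_neg_one (r*c),
    Real.mul_rpow (Real.rpow_nonneg hK.le r)
      (Real.rpow_nonneg (Real.rpow_nonneg hrc.le _) _),
    ← Real.rpow_mul hK.le, mul_one_div_cancel hr.ne', Real.rpow_one,
    ← Real.rpow_mul hrc.le, ← Real.rpow_mul hrc.le]
  congr 1
  ring

/-- `L^r` norms of complex Gaussians and their Fourier transforms, and the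
resulting value of the Wigderson-Wigderson functional. -/
theorem gaussian_Lnorms (a b : ℝ) (hb : 0 < b) (hba : b < a) :
    (∀ r : ℝ, 1 ≤ r →
      Lnorm r (fab a b) = (r * (a ^ 2 - b ^ 2)) ^ (-(1 / (2 * r))) ∧
      Lnorm r (FT (fab a b)) =
        (a ^ 2 + b ^ 2) ^ (1 / r - 1 / 2) * (r * (a ^ 2 - b ^ 2)) ^ (-(1 / (2 * r)))) ∧
    (∀ p q : ℝ, 1 < p → p < q →
      Lnorm q (fab a b) * Lnorm q (FT (fab a b))
          / (Lnorm p (fab a b) * Lnorm p (FT (fab a b)))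
        = (p ^ (1 / p) / q ^ (1 / q)) * ((a ^ 2 + b ^ 2) / (a ^ 2 - b ^ 2)) ^ (1 / q - 1 / p)) := by
  have hA : (0:ℝ) < a ^ 2 - b ^ 2 := by nlinarith
  have hM : (0:ℝ) < a ^ 2 + b ^ 2 := by positivity
  set A := a ^ 2 - b ^ 2 with hAdef
  set M := a ^ 2 + b ^ 2 with hMdef
  set c : ℂ := ((a : ℂ) + (b : ℂ) * Complex.I) ^ 2 with hcdef
  have hcre : c.re = A := by
    simp [hcdef, hAdef, Complex.mul_re, Complex.add_re, Complex.add_im, pow_two]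
  have hcre' : 0 < c.re := by rw [hcre]; exact hA
  have habsc : ‖c‖ = M := by
    rw [hcdef, norm_pow, Complex.norm_def, Complex.normSq_add_mul_I]
    rw [Real.sq_sqrt (by positivity)]
  have habs_fab : ∀ x : ℝ, ‖fab a b x‖
      = 1 * Real.exp (-(Real.pi * A) * x ^ 2) := by
    intro x
    rw [fab, Complex.norm_exp, one_mul]
    congr 1
    have : -(Real.pi:ℂ) * c * (x:ℂ) ^ 2 = ((-(Real.pi) * x ^ 2 : ℝ) : ℂ) * c := by
      push_cast; ring
    rw [this, Complex.re_ofReal_mul, hcre]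
    ring
  have hFT : FT (fab a b) = fun ξ : ℝ =>
      1 / c ^ (1/2 : ℂ) * Complex.exp (-(Real.pi:ℂ) / c * (ξ:ℂ) ^ 2) := by
    rw [FT_eq_fourierIntegral]
    exact fourier_gaussian_pi hcre'
  have hc0 : c ≠ 0 := by
    intro h; rw [h] at hcre'; simp at hcre'
  have habs_FT : ∀ x : ℝ, ‖FT (fab a b) x‖
      = M ^ (-(1/2) : ℝ) * Real.exp (-(Real.pi * (A / M ^ 2)) * x ^ 2) := by
    intro ξ
    rw [hFT]
    simp only [norm_mul, norm_div, norm_one, Complex.norm_exp]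
    have h1 : ‖c ^ (1/2 : ℂ)‖ = M ^ ((1:ℝ)/2) := by
      rw [show (1/2 : ℂ) = ((1/2 : ℝ) : ℂ) by norm_num, Complex.norm_cpow_real, habsc]
    have h2 : (-(Real.pi:ℂ) / c * (ξ:ℂ) ^ 2).re = -(Real.pi * (A / M ^ 2)) * ξ ^ 2 := by
      have : -(Real.pi:ℂ) / c * (ξ:ℂ) ^ 2 = ((-(Real.pi) * ξ ^ 2 : ℝ) : ℂ) * c⁻¹ := by
        push_cast; field_simp
      rw [this, Complex.re_ofReal_mul, Complex.inv_re, hcre, Complex.normSq_eq_norm_sq, habsc]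
      ring
    rw [h1, h2, one_div, ← Real.rpow_neg hM.le]
  have key : ∀ {x : ℝ}, 0 < x → ∀ y : ℝ, x ^ y = Real.exp (Real.log x * y) :=
    fun hx y => Real.rpow_def_of_pos hx y
  have main : ∀ r : ℝ, 1 ≤ r →
      Lnorm r (fab a b) = (r * A) ^ (-(1 / (2 * r))) ∧
      Lnorm r (FT (fab a b)) = M ^ (1 / r - 1 / 2) * (r * A) ^ (-(1 / (2 * r))) := by
    intro r hr
    have hr0 : (0:ℝ) < r := lt_of_lt_of_le one_pos hr
    constructor
    · rw [Lnorm_of_abs_gauss one_pos hA hr0 habs_fab, one_mul]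
    · rw [Lnorm_of_abs_gauss (by positivity) (by positivity) hr0 habs_FT]
      rw [key hM, key (by positivity : (0:ℝ) < r * (A / M ^ 2)), key hM,
        key (by positivity : (0:ℝ) < r * A), ← Real.exp_add, ← Real.exp_add,
        Real.exp_eq_exp, Real.log_mul hr0.ne' (by positivity : (0:ℝ) < A / M ^ 2).ne',
        Real.log_div hA.ne' (by positivity : (0:ℝ) < M ^ 2).ne',
        Real.log_mul hr0.ne' hA.ne', Real.log_pow]
      field_simp
      ring
  refine ⟨main, ?_⟩
  intro p q hp hpq
  have hp0 : (0:ℝ) < p := lt_trans one_pos hp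
  have hq0 : (0:ℝ) < q := lt_trans hp0 hpq
  obtain ⟨hp1, hp2⟩ := main p hp.le
  obtain ⟨hq1, hq2⟩ := main q (le_of_lt (lt_trans hp hpq))
  rw [hp1, hp2, hq1, hq2]
  rw [key hM, key (by positivity : (0:ℝ) < q * A), key hM,
    key (by positivity : (0:ℝ) < p * A), key hp0, key hq0,
    key (by positivity : (0:ℝ) < M / A)]
  rw [← Real.exp_add, ← Real.exp_add, ← Real.exp_add, ← Real.exp_add,
    ← Real.exp_sub, ← Real.exp_sub, ← Real.exp_add, Real.exp_eq_exp,
    Real.log_mul hq0.ne' hA.ne', Real.log_mul hp0.ne' hA.ne',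
    Real.log_div hM.ne' hA.ne']
  field_simp
  ring
end

section
/- Limits of the Wigderson-Wigderson functional along the family g_c: for c > 0 let g_c(x) = c^(−1/2) exp(−π x²/c²) + c^(1/2) exp(−π c² x²) ∈ 𝓢(ℝ); then 𝓕 g_c = g_c, and for reals 1 < p < q < ∞: if 1/p + 1/q < 1 then ‖g_c‖_q ‖𝓕g_c‖_q / (‖g_c‖_p ‖𝓕g_c‖_p) → ∞ as c → ∞, while if 1/p + 1/q > 1 then ‖g_c‖_q ‖𝓕g_c‖_q / (‖g_c‖_p ‖𝓕g_c‖_p) → 0 as c → ∞. -/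
open MeasureTheory SchwartzMap

/-- The self-dual Gaussian family
`g_c(x) = c^(-1/2) exp(-π x²/c²) + c^(1/2) exp(-π c² x²)`. -/
noncomputable def gfam (c : ℝ) : ℝ → ℂ := fun x =>
  ((c ^ (-(1 / 2) : ℝ) * Real.exp (-Real.pi * x ^ 2 / c ^ 2)
    + c ^ ((1 / 2) : ℝ) * Real.exp (-Real.pi * c ^ 2 * x ^ 2) : ℝ) : ℂ)

open Real Filter FourierTransform in
lemma FT_eq' (f : ℝ → ℂ) : FT f = 𝓕 f := by
  ext ξ
  rw [FT, Real.fourier_real_eq_integral_exp_smul]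
  congr 1
  ext x
  rw [smul_eq_mul, mul_comm]
  congr 1
  push_cast
  ring_nf

lemma FT_gauss' (b : ℝ) (hb : 0 < b) :
    FT (fun x : ℝ => ((Real.exp (-Real.pi * b * x ^ 2) : ℝ) : ℂ)) =
      fun t : ℝ => ((b ^ (-(1/2) : ℝ) * Real.exp (-Real.pi / b * t ^ 2) : ℝ) : ℂ) := by
  have h : (fun x : ℝ => ((Real.exp (-Real.pi * b * x ^ 2) : ℝ) : ℂ))
      = fun x : ℝ => Complex.exp (-(Real.pi:ℂ) * (b:ℂ) * (x:ℂ) ^ 2) := by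
    ext x; push_cast [Complex.ofReal_exp]; ring_nf
  rw [FT_eq', h, fourier_gaussian_pi (by simpa using hb)]
  ext t
  rw [show ((1/2:ℂ)) = ((1/2:ℝ):ℂ) from by norm_num, ← Complex.ofReal_cpow hb.le]
  rw [show (-(Real.pi:ℂ)/(b:ℂ)*(t:ℂ)^2) = ((-Real.pi/b*t^2 : ℝ) : ℂ) from by push_cast; ring,
    ← Complex.ofReal_exp]
  push_cast [Real.rpow_neg hb.le]
  ring_nf

lemma gauss_mul_integrable' (b : ℝ) (hb : 0 < b) (ξ : ℝ) :
    Integrable (fun x : ℝ => ((Real.exp (-Real.pi * b * x ^ 2) : ℝ) : ℂ)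
      * Complex.exp (-2 * Real.pi * Complex.I * x * ξ)) := by
  have h : (fun x : ℝ => ((Real.exp (-Real.pi * b * x ^ 2) : ℝ) : ℂ)
      * Complex.exp (-2 * Real.pi * Complex.I * x * ξ))
      = fun x : ℝ => Complex.exp (-(Real.pi * b : ℂ) * x ^ 2
        + (-2 * Real.pi * Complex.I * ξ) * x + 0) := by
    ext x
    rw [show ((Real.exp (-Real.pi * b * x ^ 2) : ℝ) : ℂ)
        = Complex.exp ((-Real.pi * b * x ^ 2 : ℝ) : ℂ) from by rw [Complex.ofReal_exp],
      ← Complex.exp_add]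
    congr 1
    push_cast
    ring
  rw [h]
  exact integrable_cexp_quadratic (by simp [Real.pi_pos.le, mul_pos Real.pi_pos hb]) _ _

lemma FT_two_gauss' (A B b₁ b₂ : ℝ) (h1 : 0 < b₁) (h2 : 0 < b₂) :
    FT (fun x : ℝ => ((A * Real.exp (-Real.pi * b₁ * x ^ 2)
        + B * Real.exp (-Real.pi * b₂ * x ^ 2) : ℝ) : ℂ))
    = fun t : ℝ => ((A * (b₁ ^ (-(1/2):ℝ) * Real.exp (-Real.pi / b₁ * t ^ 2))
        + B * (b₂ ^ (-(1/2):ℝ) * Real.exp (-Real.pi / b₂ * t ^ 2)) : ℝ) : ℂ) := by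
  ext ξ
  have key : (fun x : ℝ => ((A * Real.exp (-Real.pi * b₁ * x ^ 2)
        + B * Real.exp (-Real.pi * b₂ * x ^ 2) : ℝ) : ℂ)
        * Complex.exp (-2 * Real.pi * Complex.I * x * ξ))
      = fun x : ℝ => (A:ℂ) * (((Real.exp (-Real.pi * b₁ * x ^ 2) : ℝ) : ℂ)
          * Complex.exp (-2 * Real.pi * Complex.I * x * ξ))
        + (B:ℂ) * (((Real.exp (-Real.pi * b₂ * x ^ 2) : ℝ) : ℂ)
          * Complex.exp (-2 * Real.pi * Complex.I * x * ξ)) := by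
    ext x; push_cast; ring
  rw [show FT (fun x : ℝ => ((A * Real.exp (-Real.pi * b₁ * x ^ 2)
        + B * Real.exp (-Real.pi * b₂ * x ^ 2) : ℝ) : ℂ)) ξ
      = ∫ x : ℝ, ((A * Real.exp (-Real.pi * b₁ * x ^ 2)
        + B * Real.exp (-Real.pi * b₂ * x ^ 2) : ℝ) : ℂ)
        * Complex.exp (-2 * Real.pi * Complex.I * x * ξ) from rfl]
  simp_rw [key]
  rw [integral_add (((gauss_mul_integrable' b₁ h1 ξ).const_mul _))
      ((gauss_mul_integrable' b₂ h2 ξ).const_mul _),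
    integral_const_mul, integral_const_mul]
  have e1 : (∫ x : ℝ, ((Real.exp (-Real.pi * b₁ * x ^ 2) : ℝ) : ℂ)
      * Complex.exp (-2 * Real.pi * Complex.I * x * ξ))
      = ((b₁ ^ (-(1/2) : ℝ) * Real.exp (-Real.pi / b₁ * ξ ^ 2) : ℝ) : ℂ) := by
    have := congrFun (FT_gauss' b₁ h1) ξ
    rwa [FT] at this
  have e2 : (∫ x : ℝ, ((Real.exp (-Real.pi * b₂ * x ^ 2) : ℝ) : ℂ)
      * Complex.exp (-2 * Real.pi * Complex.I * x * ξ))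
      = ((b₂ ^ (-(1/2) : ℝ) * Real.exp (-Real.pi / b₂ * ξ ^ 2) : ℝ) : ℂ) := by
    have := congrFun (FT_gauss' b₂ h2) ξ
    rwa [FT] at this
  rw [e1, e2]
  push_cast
  ring

lemma FT_gfam (c : ℝ) (hc : 0 < c) : FT (gfam c) = gfam c := by
  have hc2 : (0:ℝ) < c ^ 2 := by positivity
  have h2 : (c ^ 2 : ℝ) ^ (-(1/2):ℝ) = c⁻¹ := by
    rw [← Real.rpow_natCast c 2, ← Real.rpow_mul hc.le]
    norm_num
    rw [Real.rpow_neg_one]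
  have h1 : ((c ^ 2)⁻¹ : ℝ) ^ (-(1/2):ℝ) = c := by
    rw [Real.inv_rpow hc2.le, h2, inv_inv]
  have hA : c ^ (-(1/2):ℝ) * c = c ^ ((1/2):ℝ) := by
    have h := Real.rpow_add hc (-(1/2)) 1
    rw [Real.rpow_one] at h
    norm_num at h
    linarith
  have hB : c ^ ((1/2):ℝ) * c⁻¹ = c ^ (-(1/2):ℝ) := by
    have h := Real.rpow_add hc (1/2) (-1)
    rw [Real.rpow_neg_one] at h
    norm_num at h
    linarith
  have harg : ∀ x : ℝ, -Real.pi * x ^ 2 / c ^ 2 = -Real.pi * (c ^ 2)⁻¹ * x ^ 2 := by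
    intro x; ring
  have hshape : gfam c = fun x : ℝ => ((c ^ (-(1/2):ℝ) * Real.exp (-Real.pi * (c^2)⁻¹ * x ^ 2)
      + c ^ ((1/2):ℝ) * Real.exp (-Real.pi * (c^2) * x ^ 2) : ℝ) : ℂ) := by
    ext x
    rw [gfam, harg x]
  rw [hshape, FT_two_gauss' _ _ _ _ (by positivity) hc2]
  ext t
  rw [h1, h2]
  have e1 : -Real.pi / (c ^ 2)⁻¹ * t ^ 2 = -Real.pi * c ^ 2 * t ^ 2 := by
    field_simp
  have e2 : -Real.pi / c ^ 2 * t ^ 2 = -Real.pi * (c ^ 2)⁻¹ * t ^ 2 := by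
    field_simp
  rw [e1, e2, ← harg t]
  push_cast [← mul_assoc, hA, hB]
  ring

lemma exp_rpow' (t r : ℝ) : Real.exp t ^ r = Real.exp (r * t) := by
  rw [Real.rpow_def_of_pos (Real.exp_pos t), Real.log_exp, mul_comm]

lemma int_gauss_pow (A s r : ℝ) (hA : 0 < A) (_hs : 0 < s) (_hr : 0 < r) :
    ∫ x : ℝ, (A * Real.exp (-s * x ^ 2)) ^ (r:ℝ) = A ^ (r:ℝ) * Real.sqrt (Real.pi / (r * s)) := by
  have h : ∀ x : ℝ, (A * Real.exp (-s * x ^ 2)) ^ (r:ℝ)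
      = A ^ (r:ℝ) * Real.exp (-(r * s) * x ^ 2) := by
    intro x
    rw [Real.mul_rpow hA.le (Real.exp_pos _).le, exp_rpow']
    ring_nf
  simp_rw [h]
  rw [integral_const_mul, integral_gaussian]

lemma add_rpow_le (a b r : ℝ) (ha : 0 ≤ a) (hb : 0 ≤ b) (hr : 0 ≤ r) :
    (a + b) ^ (r:ℝ) ≤ 2 ^ (r:ℝ) * (a ^ (r:ℝ) + b ^ (r:ℝ)) := by
  have h1 : a + b ≤ 2 * max a b := by
    rcases le_total a b with h | h
    · rw [max_eq_right h]; linarith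
    · rw [max_eq_left h]; linarith
  calc (a + b) ^ (r:ℝ) ≤ (2 * max a b) ^ (r:ℝ) :=
        Real.rpow_le_rpow (by positivity) h1 hr
    _ = 2 ^ (r:ℝ) * (max a b) ^ (r:ℝ) :=
        Real.mul_rpow (by norm_num) (le_max_of_le_left ha)
    _ ≤ 2 ^ (r:ℝ) * (a ^ (r:ℝ) + b ^ (r:ℝ)) := by
        gcongr
        rcases le_total a b with h | h
        · rw [max_eq_right h]
          exact le_add_of_nonneg_left (Real.rpow_nonneg ha _)
        · rw [max_eq_left h]
          exact le_add_of_nonneg_right (Real.rpow_nonneg hb _)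

lemma lnorm_gfam_bounds (r : ℝ) (hr : 1 < r) :
    ∃ A B : ℝ, 0 < A ∧ 0 < B ∧ ∀ c : ℝ, 1 ≤ c →
      A * c ^ (|1/2 - 1/r| : ℝ) ≤ Lnorm r (gfam c) ∧
      Lnorm r (gfam c) ≤ B * c ^ (|1/2 - 1/r| : ℝ) := by
  have hr0 : (0:ℝ) < r := by linarith
  set K : ℝ := Real.sqrt (1/r) with hK
  have hK0 : 0 < K := Real.sqrt_pos.mpr (by positivity)
  refine ⟨K ^ (1/r : ℝ), (2 ^ (r:ℝ) * 2 * K) ^ (1/r : ℝ), by positivity, by positivity, ?_⟩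
  intro c hc
  have hc0 : (0:ℝ) < c := by linarith
  set e₁ : ℝ := -(1/2) * r + 1 with he₁
  set e₂ : ℝ := (1/2) * r + (-1) with he₂
  set M : ℝ := max e₁ e₂ with hM
  set a : ℝ → ℝ := fun x => c ^ (-(1/2) : ℝ) * Real.exp (-(Real.pi / c^2) * x ^ 2) with haa
  set b : ℝ → ℝ := fun x => c ^ ((1/2) : ℝ) * Real.exp (-(Real.pi * c^2) * x ^ 2) with hbb
  have habs : ∀ x : ℝ, ‖gfam c x‖ = a x + b x := by
    intro x
    rw [gfam, Complex.norm_real, Real.norm_eq_abs, abs_of_nonneg (by positivity)]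
    rw [show -Real.pi * x ^ 2 / c ^ 2 = -(Real.pi / c ^ 2) * x ^ 2 by ring,
      show -Real.pi * c ^ 2 * x ^ 2 = -(Real.pi * c ^ 2) * x ^ 2 by ring, haa, hbb]
  have Ia : ∫ x : ℝ, a x ^ (r:ℝ) = K * c ^ e₁ := by
    rw [haa]
    rw [int_gauss_pow _ _ _ (by positivity) (by positivity) hr0]
    have s1 : Real.sqrt (Real.pi / (r * (Real.pi / c^2))) = c * K := by
      rw [show Real.pi / (r * (Real.pi / c^2)) = c^2 * (1/r) by
          field_simp,
        Real.sqrt_mul (sq_nonneg c), Real.sqrt_sq hc0.le, hK]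
    rw [s1, ← Real.rpow_mul hc0.le]
    rw [show (c : ℝ) ^ (-(1/2)*r : ℝ) * (c * K) = K * (c ^ (-(1/2)*r : ℝ) * c ^ (1:ℝ)) by
        rw [Real.rpow_one]; ring,
      ← Real.rpow_add hc0]
  have Ib : ∫ x : ℝ, b x ^ (r:ℝ) = K * c ^ e₂ := by
    rw [hbb]
    rw [int_gauss_pow _ _ _ (by positivity) (by positivity) hr0]
    have s2 : Real.sqrt (Real.pi / (r * (Real.pi * c^2))) = c⁻¹ * K := by
      rw [show Real.pi / (r * (Real.pi * c^2)) = (c⁻¹)^2 * (1/r) by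
          field_simp,
        Real.sqrt_mul (sq_nonneg _), Real.sqrt_sq (by positivity), hK]
    rw [s2, ← Real.rpow_mul hc0.le]
    rw [show (c : ℝ) ^ ((1/2)*r : ℝ) * (c⁻¹ * K) = K * (c ^ ((1/2)*r : ℝ) * c ^ (-1:ℝ)) by
        rw [Real.rpow_neg_one]; ring,
      ← Real.rpow_add hc0]
  have intA : Integrable (fun x : ℝ => a x ^ (r:ℝ)) := by
    have h : (fun x : ℝ => a x ^ (r:ℝ))
        = fun x : ℝ => (c ^ (-(1/2):ℝ)) ^ (r:ℝ) * Real.exp (-(r * (Real.pi / c^2)) * x ^ 2) := by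
      ext x
      rw [haa, Real.mul_rpow (by positivity) (Real.exp_pos _).le, exp_rpow']
      ring_nf
    rw [h]
    exact (integrable_exp_neg_mul_sq (by positivity)).const_mul _
  have intB : Integrable (fun x : ℝ => b x ^ (r:ℝ)) := by
    have h : (fun x : ℝ => b x ^ (r:ℝ))
        = fun x : ℝ => (c ^ ((1/2):ℝ)) ^ (r:ℝ) * Real.exp (-(r * (Real.pi * c^2)) * x ^ 2) := by
      ext x
      rw [hbb, Real.mul_rpow (by positivity) (Real.exp_pos _).le, exp_rpow']
      ring_nf
    rw [h]
    exact (integrable_exp_neg_mul_sq (by positivity)).const_mul _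
  have ha_pos : ∀ x : ℝ, 0 < a x := fun x => by rw [haa]; positivity
  have hb_pos : ∀ x : ℝ, 0 < b x := fun x => by rw [hbb]; positivity
  have contab : Continuous (fun x : ℝ => (a x + b x) ^ (r:ℝ)) := by
    apply Continuous.rpow_const
    · rw [haa, hbb]; continuity
    · exact fun x => Or.inr hr0.le
  have intAB : Integrable (fun x : ℝ => (a x + b x) ^ (r:ℝ)) := by
    apply Integrable.mono' ((intA.add intB).const_mul (2 ^ (r:ℝ)))
      contab.aestronglyMeasurable
    filter_upwards with x
    rw [Real.norm_eq_abs, abs_of_nonneg (Real.rpow_nonneg (by positivity) _)]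
    exact add_rpow_le _ _ _ (ha_pos x).le (hb_pos x).le hr0.le
  have hlow : K * c ^ M ≤ ∫ x : ℝ, (a x + b x) ^ (r:ℝ) := by
    rcases max_cases e₁ e₂ with ⟨h, _⟩ | ⟨h, _⟩
    · rw [hM, h, ← Ia]
      apply integral_mono intA intAB
      intro x
      exact Real.rpow_le_rpow (ha_pos x).le (le_add_of_nonneg_right (hb_pos x).le) hr0.le
    · rw [hM, h, ← Ib]
      apply integral_mono intB intAB
      intro x
      exact Real.rpow_le_rpow (hb_pos x).le (le_add_of_nonneg_left (ha_pos x).le) hr0.le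
  have hhigh : (∫ x : ℝ, (a x + b x) ^ (r:ℝ)) ≤ 2 ^ (r:ℝ) * 2 * K * c ^ M := by
    have step1 : (∫ x : ℝ, (a x + b x) ^ (r:ℝ))
        ≤ ∫ x : ℝ, 2 ^ (r:ℝ) * (a x ^ (r:ℝ) + b x ^ (r:ℝ)) := by
      apply integral_mono intAB ((intA.add intB).const_mul _)
      intro x
      exact add_rpow_le _ _ _ (ha_pos x).le (hb_pos x).le hr0.le
    have step2 : (∫ x : ℝ, 2 ^ (r:ℝ) * (a x ^ (r:ℝ) + b x ^ (r:ℝ)))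
        = 2 ^ (r:ℝ) * (K * c ^ e₁ + K * c ^ e₂) := by
      rw [integral_const_mul, integral_add intA intB, Ia, Ib]
    have h1 : c ^ e₁ ≤ c ^ M := Real.rpow_le_rpow_of_exponent_le hc (le_max_left _ _)
    have h2 : c ^ e₂ ≤ c ^ M := Real.rpow_le_rpow_of_exponent_le hc (le_max_right _ _)
    calc (∫ x : ℝ, (a x + b x) ^ (r:ℝ)) ≤ 2 ^ (r:ℝ) * (K * c ^ e₁ + K * c ^ e₂) := by
          rw [← step2]; exact step1
      _ ≤ 2 ^ (r:ℝ) * (K * c ^ M + K * c ^ M) := by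
          gcongr
      _ = 2 ^ (r:ℝ) * 2 * K * c ^ M := by ring
  have hint : (∫ x : ℝ, ‖gfam c x‖ ^ (r:ℝ)) = ∫ x : ℝ, (a x + b x) ^ (r:ℝ) := by
    congr 1; ext x; rw [habs x]
  have hMμ : M * (1/r) = |1/2 - 1/r| := by
    rcases le_or_gt r 2 with h | h
    · have h1r : 1/2 - 1/r ≤ 0 := by
        rw [sub_nonpos, div_le_div_iff₀ (by norm_num) hr0]; linarith
      rw [abs_of_nonpos h1r, hM, max_eq_left (by rw [he₁, he₂]; linarith), he₁]
      field_simp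
      ring
    · have h1r : 0 ≤ 1/2 - 1/r := by
        rw [sub_nonneg, div_le_div_iff₀ hr0 (by norm_num)]; linarith
      rw [abs_of_nonneg h1r, hM, max_eq_right (by rw [he₁, he₂]; linarith), he₂]
      field_simp
      ring
  constructor
  · rw [Lnorm, hint]
    calc K ^ (1/r:ℝ) * c ^ (|1/2 - 1/r|:ℝ) = (K * c ^ M) ^ (1/r:ℝ) := by
          rw [Real.mul_rpow hK0.le (Real.rpow_nonneg hc0.le _), ← Real.rpow_mul hc0.le, hMμ]
      _ ≤ (∫ x : ℝ, (a x + b x) ^ (r:ℝ)) ^ (1/r:ℝ) :=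
          Real.rpow_le_rpow (mul_nonneg hK0.le (Real.rpow_nonneg hc0.le _)) hlow
            (one_div_nonneg.mpr hr0.le)
  · rw [Lnorm, hint]
    calc (∫ x : ℝ, (a x + b x) ^ (r:ℝ)) ^ (1/r:ℝ)
        ≤ (2 ^ (r:ℝ) * 2 * K * c ^ M) ^ (1/r:ℝ) := by
          apply Real.rpow_le_rpow _ hhigh (one_div_nonneg.mpr hr0.le)
          exact integral_nonneg fun x => Real.rpow_nonneg (by positivity) _
      _ = (2 ^ (r:ℝ) * 2 * K) ^ (1/r:ℝ) * c ^ (|1/2 - 1/r|:ℝ) := by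
          rw [Real.mul_rpow (by positivity) (Real.rpow_nonneg hc0.le _),
            ← Real.rpow_mul hc0.le, hMμ]

lemma exp_sign (p q : ℝ) (hp : 1 < p) (hpq : p < q) :
    (1/p + 1/q < 1 → |1/2 - 1/p| < |1/2 - 1/q|) ∧
    (1 < 1/p + 1/q → |1/2 - 1/q| < |1/2 - 1/p|) := by
  have hq : 1 < q := hp.trans hpq
  have hp0 : (0:ℝ) < p := by linarith
  have hq0 : (0:ℝ) < q := by linarith
  have huq : (0:ℝ) < 1/q := by positivity
  have h2 : 1/q < 1/p := one_div_lt_one_div_of_lt hp0 hpq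
  have h1 : 1/p < 1 := by rw [div_lt_one hp0]; linarith
  constructor <;> intro h <;>
    rcases abs_cases ((1:ℝ)/2 - 1/p) with ⟨e1, i1⟩ | ⟨e1, i1⟩ <;>
    rcases abs_cases ((1:ℝ)/2 - 1/q) with ⟨e2, i2⟩ | ⟨e2, i2⟩ <;>
    rw [e1, e2] <;> linarith

/-- Limits of the Wigderson-Wigderson functional along the family `g_c` as `c → ∞`. -/
theorem WW_functional_gfam_limits (p q : ℝ) (hp : 1 < p) (hpq : p < q) :
    (∀ c : ℝ, 0 < c → FT (gfam c) = gfam c) ∧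
    (1 / p + 1 / q < 1 →
      Filter.Tendsto
        (fun c : ℝ => Lnorm q (gfam c) * Lnorm q (FT (gfam c))
          / (Lnorm p (gfam c) * Lnorm p (FT (gfam c))))
        Filter.atTop Filter.atTop) ∧
    (1 / p + 1 / q > 1 →
      Filter.Tendsto
        (fun c : ℝ => Lnorm q (gfam c) * Lnorm q (FT (gfam c))
          / (Lnorm p (gfam c) * Lnorm p (FT (gfam c))))
        Filter.atTop (nhds 0)) := by
  have hq : 1 < q := hp.trans hpq
  obtain ⟨Ap, Bp, hAp, hBp, hbp⟩ := lnorm_gfam_bounds p hp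
  obtain ⟨Aq, Bq, hAq, hBq, hbq⟩ := lnorm_gfam_bounds q hq
  set μp : ℝ := |1/2 - 1/p| with hμp
  set μq : ℝ := |1/2 - 1/q| with hμq
  set α : ℝ := 2*μq - 2*μp with hα
  set C1 : ℝ := Aq * Aq / (Bp * Bp) with hC1
  set C2 : ℝ := Bq * Bq / (Ap * Ap) with hC2
  have hC1p : 0 < C1 := by rw [hC1]; positivity
  have hC2p : 0 < C2 := by rw [hC2]; positivity
  have key : ∀ c : ℝ, 1 ≤ c →
      C1 * c ^ α ≤ Lnorm q (gfam c) * Lnorm q (FT (gfam c))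
        / (Lnorm p (gfam c) * Lnorm p (FT (gfam c))) ∧
      Lnorm q (gfam c) * Lnorm q (FT (gfam c))
        / (Lnorm p (gfam c) * Lnorm p (FT (gfam c))) ≤ C2 * c ^ α := by
    intro c hc
    have hc0 : (0:ℝ) < c := by linarith
    rw [FT_gfam c hc0]
    obtain ⟨lq, uq⟩ := hbq c hc
    obtain ⟨lp, up⟩ := hbp c hc
    have hcp0 : (0:ℝ) < c ^ μp := Real.rpow_pos_of_pos hc0 _
    have hcq0 : (0:ℝ) < c ^ μq := Real.rpow_pos_of_pos hc0 _
    have hLq0 : 0 < Lnorm q (gfam c) := lt_of_lt_of_le (by positivity) lq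
    have hLp0 : 0 < Lnorm p (gfam c) := lt_of_lt_of_le (by positivity) lp
    have hrat : c ^ α = (c ^ μq * c ^ μq) / (c ^ μp * c ^ μp) := by
      rw [hα, Real.rpow_sub hc0, show (2*μq : ℝ) = μq + μq by ring,
        show (2*μp : ℝ) = μp + μp by ring, Real.rpow_add hc0, Real.rpow_add hc0]
    constructor
    · have heq : C1 * c ^ α
          = (Aq * c ^ μq) * (Aq * c ^ μq) / ((Bp * c ^ μp) * (Bp * c ^ μp)) := by
        rw [hrat, hC1]
        field_simp
      rw [heq]
      gcongr
    · have heq : C2 * c ^ α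
          = (Bq * c ^ μq) * (Bq * c ^ μq) / ((Ap * c ^ μp) * (Ap * c ^ μp)) := by
        rw [hrat, hC2]
        field_simp
      rw [heq]
      gcongr
  refine ⟨fun c hc => FT_gfam c hc, ?_, ?_⟩
  · intro h
    have hα0 : 0 < α := by
      have := (exp_sign p q hp hpq).1 h
      rw [hα, hμp, hμq]; linarith
    apply Filter.tendsto_atTop_mono' Filter.atTop ?_
      (Filter.Tendsto.const_mul_atTop hC1p (tendsto_rpow_atTop hα0))
    filter_upwards [Filter.eventually_ge_atTop (1:ℝ)] with c hc
    exact (key c hc).1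
  · intro h
    have hα0 : 0 < -α := by
      have := (exp_sign p q hp hpq).2 h
      rw [hα, hμp, hμq]; linarith
    have htend : Filter.Tendsto (fun c : ℝ => C2 * c ^ α) Filter.atTop (nhds 0) := by
      have h0 := (tendsto_rpow_neg_atTop hα0).const_mul C2
      rw [mul_zero] at h0
      simpa using h0
    apply squeeze_zero' ?_ ?_ htend
    · filter_upwards [Filter.eventually_ge_atTop (1:ℝ)] with c hc
      exact le_trans (by positivity) (key c hc).1
    · filter_upwards [Filter.eventually_ge_atTop (1:ℝ)] with c hc
      exact (key c hc).2
end
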